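/- Let ρ and σ be density matrices on ℂ^{d_1} ⊗ … ⊗ ℂ^{d_n} and c ∈ (0,1] such that σ − cρ is positive semidefinite. Then E_R(σ) ≥ c E_R(ρ) − h₂(c), where h₂(c) = −c ln c − (1−c) ln(1−c) (with h₂(1) = 0). -/

import Mathlib

open scoped ENNReal ComplexOrder
open Matrix

noncomputable section

/-- A density matrix: positive semidefinite with unit trace. -/
def Matrix.IsDensity {I : Type*} [Fintype I] (ρ : Matrix I I ℂ) : Prop :=
  ρ.PosSemidef ∧ ρ.trace = 1

/-- An orthogonal projection matrix: Hermitian and idempotent. -/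
def Matrix.IsOrthoProj {I : Type*} [Fintype I] (P : Matrix I I ℂ) : Prop :=
  P.IsHermitian ∧ P * P = P

/-- The Kronecker product `P 1 ⊗ … ⊗ P n` of matrices on the factors. -/
def piKron {n : ℕ} {d : Fin n → ℕ} (P : ∀ s, Matrix (Fin (d s)) (Fin (d s)) ℂ) :
    Matrix (∀ s, Fin (d s)) (∀ s, Fin (d s)) ℂ :=
  Matrix.of fun i j => ∏ s, P s (i s) (j s)

/-- The `s`-th marginal of a multipartite matrix (partial trace over all other factors). -/
def pmarginal {n : ℕ} {d : Fin n → ℕ}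
    (ρ : Matrix (∀ s, Fin (d s)) (∀ s, Fin (d s)) ℂ) (s : Fin n) :
    Matrix (Fin (d s)) (Fin (d s)) ℂ :=
  Matrix.of fun i i' => ∑ j : ∀ t, Fin (d t), if j s = i then ρ j (Function.update j s i') else 0

/-- Matrix logarithm of a Hermitian matrix via the spectral decomposition
(with the convention `ln 0 = 0` on the kernel); junk value `0` otherwise. -/
def matLog {I : Type*} [Fintype I] [DecidableEq I] (ρ : Matrix I I ℂ) : Matrix I I ℂ :=
  if h : ρ.IsHermitian then
    (h.eigenvectorUnitary : Matrix I I ℂ) *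
      Matrix.diagonal (fun k => (Real.log (h.eigenvalues k) : ℂ)) *
      (star (h.eigenvectorUnitary : Matrix I I ℂ))
  else 0

open Classical in
/-- Quantum relative entropy `D(ρ‖σ) ∈ [0,∞]`:
`Tr[ρ(ln ρ − ln σ)]` if `range ρ ⊆ range σ`, and `+∞` otherwise. -/
def qRelEnt {I : Type*} [Fintype I] [DecidableEq I] (ρ σ : Matrix I I ℂ) : ℝ≥0∞ :=
  if Set.range ρ.mulVec ⊆ Set.range σ.mulVec then
    ENNReal.ofReal ((ρ * (matLog ρ - matLog σ)).trace.re)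
  else ∞

/-- Separable states: convex hull of product density matrices. -/
def IsSepState {n : ℕ} {d : Fin n → ℕ}
    (σ : Matrix (∀ s, Fin (d s)) (∀ s, Fin (d s)) ℂ) : Prop :=
  σ ∈ convexHull ℝ
    {τ | ∃ P : ∀ s, Matrix (Fin (d s)) (Fin (d s)) ℂ, (∀ s, (P s).IsDensity) ∧ τ = piKron P}

/-- The relative entropy of entanglement `E_R(ρ) = inf { D(ρ‖σ) : σ separable }`. -/
def relEntEnt {n : ℕ} {d : Fin n → ℕ}
    (ρ : Matrix (∀ s, Fin (d s)) (∀ s, Fin (d s)) ℂ) : ℝ≥0∞ :=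
  ⨅ (σ : Matrix (∀ s, Fin (d s)) (∀ s, Fin (d s)) ℂ) (_ : IsSepState σ), qRelEnt ρ σ

/-- Von Neumann entropy `H(ρ) = −∑ λ_k ln λ_k` (junk value `0` for non-Hermitian input). -/
def vnEntropy {I : Type*} [Fintype I] [DecidableEq I] (ρ : Matrix I I ℂ) : ℝ :=
  if h : ρ.IsHermitian then -∑ k, h.eigenvalues k * Real.log (h.eigenvalues k) else 0

/-- Trace norm `‖A‖₁ = Tr √(AᴴA)`. -/
def traceNorm {I : Type*} [Fintype I] [DecidableEq I] (A : Matrix I I ℂ) : ℝ :=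
  (((Matrix.posSemidef_conjTranspose_mul_self A).1.eigenvectorUnitary : Matrix I I ℂ) *
      Matrix.diagonal (fun k =>
        ((Real.sqrt ((Matrix.posSemidef_conjTranspose_mul_self A).1.eigenvalues k) : ℝ) : ℂ)) *
      (star ((Matrix.posSemidef_conjTranspose_mul_self A).1.eigenvectorUnitary :
        Matrix I I ℂ))).trace.re

end

set_option linter.unusedSectionVars false
set_option maxHeartbeats 1600000

namespace Stmt12Aux

variable {I : Type*} [Fintype I] [DecidableEq I]

lemma nonneg_complex_iff {z : ℂ} : 0 ≤ z ↔ 0 ≤ z.re ∧ z.im = 0 := by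
  rw [Complex.le_def]; simp [eq_comm]

lemma psd_eq_ct_mul_self {M : Matrix I I ℂ} (hM : M.PosSemidef) :
    ∃ B : Matrix I I ℂ, M = Bᴴ * B := by
  open scoped MatrixOrder in
  obtain ⟨B, hB⟩ := CStarAlgebra.nonneg_iff_eq_star_mul_self.mp hM.nonneg
  exact ⟨B, hB⟩

lemma smul_posSemidef {M : Matrix I I ℂ} (hM : M.PosSemidef) {r : ℝ} (hr : 0 ≤ r) :
    (r • M).PosSemidef := by
  refine Matrix.PosSemidef.of_dotProduct_mulVec_nonneg ?_ (fun x => ?_)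
  · have := hM.1
    unfold Matrix.IsHermitian at *
    rw [conjTranspose_smul, this, star_trivial]
  · have h1 : (r • M) *ᵥ x = r • (M *ᵥ x) := smul_mulVec r M x
    rw [h1]
    have h2 : star x ⬝ᵥ (r • (M *ᵥ x)) = r • (star x ⬝ᵥ (M *ᵥ x)) := by
      simp only [dotProduct, Finset.smul_sum]
      congr 1
      ext j
      simp only [Pi.smul_apply, Complex.real_smul]
      ring
    rw [h2]
    have h3 := hM.dotProduct_mulVec_nonneg x
    rw [nonneg_complex_iff] at h3 ⊢
    rw [Complex.real_smul]
    constructor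
    · simp [Complex.mul_re]
      nlinarith [h3.1, h3.2]
    · simp [Complex.mul_im, h3.2]

lemma psd_diag_re_nonneg {M : Matrix I I ℂ} (hM : M.PosSemidef) (k : I) :
    0 ≤ (M k k).re := by
  have := hM.dotProduct_mulVec_nonneg (Pi.single k 1)
  rw [nonneg_complex_iff] at this
  simpa [dotProduct, mulVec, Pi.single_apply] using this.1

lemma psd_trace_re_nonneg {M : Matrix I I ℂ} (hM : M.PosSemidef) : 0 ≤ M.trace.re := by
  rw [Matrix.trace, Complex.re_sum]
  exact Finset.sum_nonneg fun k _ => psd_diag_re_nonneg hM k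

/-- trace of a product of PSD matrices has nonnegative real part. -/
lemma trace_mul_psd_nonneg {X Y : Matrix I I ℂ} (hX : X.PosSemidef) (hY : Y.PosSemidef) :
    0 ≤ (X * Y).trace.re := by
  obtain ⟨B, rfl⟩ := psd_eq_ct_mul_self hX
  have h : (Bᴴ * B * Y).trace = (B * Y * Bᴴ).trace := by
    rw [Matrix.mul_assoc, Matrix.trace_mul_comm, Matrix.mul_assoc]
  rw [h]
  exact psd_trace_re_nonneg (hY.mul_mul_conjTranspose_same B)

/-- a PSD matrix with zero trace is zero. -/
lemma psd_trace_zero {M : Matrix I I ℂ} (hM : M.PosSemidef) (h : M.trace = 0) : M = 0 := by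
  obtain ⟨B, rfl⟩ := psd_eq_ct_mul_self hM
  have htr : (Bᴴ * B).trace.re = ∑ k, ∑ j, Complex.normSq (B j k) := by
    rw [Matrix.trace, Complex.re_sum]
    congr 1; ext k
    simp only [Matrix.diag, Matrix.mul_apply, Complex.re_sum]
    congr 1; ext j
    simp [Matrix.conjTranspose_apply, Complex.normSq_apply, Complex.mul_re]
  have h0 : ∑ k, ∑ j, Complex.normSq (B j k) = 0 := by rw [← htr, h]; simp
  have hB : B = 0 := by
    ext j k
    have := (Finset.sum_eq_zero_iff_of_nonneg (fun k _ => Finset.sum_nonneg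
      (fun j _ => Complex.normSq_nonneg _))).mp h0 k (Finset.mem_univ k)
    have := (Finset.sum_eq_zero_iff_of_nonneg (fun j _ => Complex.normSq_nonneg _)).mp
      this j (Finset.mem_univ j)
    simpa using Complex.normSq_eq_zero.mp (by simpa [Complex.normSq_apply] using this)
  rw [hB]; simp

lemma trace_mul_UDU (M V : Matrix I I ℂ) (g : I → ℂ) :
    (M * (V * Matrix.diagonal g * star V)).trace = ∑ k, g k * (star V * M * V) k k := by
  have h0 : M * (V * Matrix.diagonal g * star V) = (M * V * Matrix.diagonal g) * star V := by
    simp only [Matrix.mul_assoc]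
  have h1 : star V * (M * V * Matrix.diagonal g) = (star V * M * V) * Matrix.diagonal g := by
    simp only [Matrix.mul_assoc]
  rw [h0, Matrix.trace_mul_comm, h1, Matrix.trace]
  congr 1; ext k
  simp [Matrix.diag, Matrix.mul_diagonal, mul_comm]

lemma entry_WfW (W : Matrix I I ℂ) (f : I → ℂ) (k : I) :
    ((star W * Matrix.diagonal f * W) k k) = ∑ j, f j * (Complex.normSq (W j k) : ℂ) := by
  have h1 : ∀ x, (star W * Matrix.diagonal f) k x = star (W x k) * f x := by
    intro x
    rw [Matrix.mul_diagonal]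
    simp [Matrix.star_eq_conjTranspose, Matrix.conjTranspose_apply]
  rw [Matrix.mul_apply]
  simp only [h1]
  congr 1; ext j
  rw [Complex.star_def, Complex.normSq_eq_conj_mul_self]
  ring

lemma trace_eq_sum_eigen {M : Matrix I I ℂ} (h : M.IsHermitian) :
    M.trace = ∑ k, (h.eigenvalues k : ℂ) := by
  conv_lhs => rw [h.spectral_theorem, Unitary.conjStarAlgAut_apply]
  rw [Matrix.trace_mul_cycle]
  rw [Matrix.UnitaryGroup.star_mul_self, Matrix.one_mul, Matrix.trace_diagonal]
  simp [RCLike.ofReal]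

lemma matLog_eq {M : Matrix I I ℂ} (h : M.IsHermitian) :
    matLog M = (h.eigenvectorUnitary : Matrix I I ℂ) *
      Matrix.diagonal (fun k => (Real.log (h.eigenvalues k) : ℂ)) *
      (star (h.eigenvectorUnitary : Matrix I I ℂ)) := by
  rw [matLog, dif_pos h]

lemma star_mul_self_mul_eq_diagonal' {M : Matrix I I ℂ} (h : M.IsHermitian) :
    star (h.eigenvectorUnitary : Matrix I I ℂ) * M * (h.eigenvectorUnitary : Matrix I I ℂ)
      = Matrix.diagonal (RCLike.ofReal ∘ h.eigenvalues) := by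
  have := h.conjStarAlgAut_star_eigenvectorUnitary
  rwa [Unitary.conjStarAlgAut_apply, Unitary.coe_star, star_star] at this

end Stmt12Aux

namespace Stmt12Aux

variable {I : Type*} [Fintype I] [DecidableEq I]
variable {ρ σ : Matrix I I ℂ}

/-- overlap matrix between eigenbases -/
noncomputable def ov (hρ : ρ.IsHermitian) (hσ : σ.IsHermitian) : Matrix I I ℂ :=
  star (hρ.eigenvectorUnitary : Matrix I I ℂ) * (hσ.eigenvectorUnitary : Matrix I I ℂ)

lemma ov_mul_star (hρ : ρ.IsHermitian) (hσ : σ.IsHermitian) :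
    ov hρ hσ * star (ov hρ hσ) = 1 := by
  rw [ov, StarMul.star_mul, star_star]
  have h1 : (hσ.eigenvectorUnitary : Matrix I I ℂ) * star (hσ.eigenvectorUnitary : Matrix I I ℂ)
      = 1 := Matrix.mem_unitaryGroup_iff.mp (Matrix.IsHermitian.eigenvectorUnitary _).2
  calc star (hρ.eigenvectorUnitary : Matrix I I ℂ) * (hσ.eigenvectorUnitary : Matrix I I ℂ) *
        ((star (hσ.eigenvectorUnitary : Matrix I I ℂ)) * (hρ.eigenvectorUnitary : Matrix I I ℂ))
      = star (hρ.eigenvectorUnitary : Matrix I I ℂ) *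
        (((hσ.eigenvectorUnitary : Matrix I I ℂ) * star (hσ.eigenvectorUnitary : Matrix I I ℂ)) *
          (hρ.eigenvectorUnitary : Matrix I I ℂ)) := by simp only [Matrix.mul_assoc]
    _ = 1 := by rw [h1, Matrix.one_mul, Matrix.UnitaryGroup.star_mul_self]

lemma star_ov_mul (hρ : ρ.IsHermitian) (hσ : σ.IsHermitian) :
    star (ov hρ hσ) * ov hρ hσ = 1 := by
  rw [ov, StarMul.star_mul, star_star]
  have h1 : (hρ.eigenvectorUnitary : Matrix I I ℂ) * star (hρ.eigenvectorUnitary : Matrix I I ℂ)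
      = 1 := Matrix.mem_unitaryGroup_iff.mp (Matrix.IsHermitian.eigenvectorUnitary _).2
  calc star (hσ.eigenvectorUnitary : Matrix I I ℂ) * (hρ.eigenvectorUnitary : Matrix I I ℂ) *
        ((star (hρ.eigenvectorUnitary : Matrix I I ℂ)) * (hσ.eigenvectorUnitary : Matrix I I ℂ))
      = star (hσ.eigenvectorUnitary : Matrix I I ℂ) *
        (((hρ.eigenvectorUnitary : Matrix I I ℂ) * star (hρ.eigenvectorUnitary : Matrix I I ℂ)) *
          (hσ.eigenvectorUnitary : Matrix I I ℂ)) := by simp only [Matrix.mul_assoc]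
    _ = 1 := by rw [h1, Matrix.one_mul, Matrix.UnitaryGroup.star_mul_self]

lemma sum_normSq_ov_right (hρ : ρ.IsHermitian) (hσ : σ.IsHermitian) (j : I) :
    ∑ k, Complex.normSq (ov hρ hσ j k) = 1 := by
  have h := congrArg (fun M => (M j j).re) (ov_mul_star hρ hσ)
  simp only [Matrix.mul_apply, Matrix.one_apply_eq, Complex.one_re] at h
  rw [← h, Complex.re_sum]
  congr 1; ext k
  simp [Matrix.star_eq_conjTranspose, Matrix.conjTranspose_apply, Complex.normSq_apply,
    Complex.mul_re, Complex.star_def]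

lemma sum_normSq_ov_left (hρ : ρ.IsHermitian) (hσ : σ.IsHermitian) (k : I) :
    ∑ j, Complex.normSq (ov hρ hσ j k) = 1 := by
  have h := congrArg (fun M => (M k k).re) (star_ov_mul hρ hσ)
  simp only [Matrix.mul_apply, Matrix.one_apply_eq, Complex.one_re] at h
  rw [← h, Complex.re_sum]
  congr 1; ext j
  simp [Matrix.star_eq_conjTranspose, Matrix.conjTranspose_apply, Complex.normSq_apply,
    Complex.mul_re, Complex.star_def]

/-- conjugated matrix in the σ-eigenbasis, as `Wᴴ D W` -/
lemma starV_mul_V (hρ : ρ.IsHermitian) (hσ : σ.IsHermitian) :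
    star (hσ.eigenvectorUnitary : Matrix I I ℂ) * ρ * (hσ.eigenvectorUnitary : Matrix I I ℂ)
      = star (ov hρ hσ) * Matrix.diagonal (fun j => (hρ.eigenvalues j : ℂ)) * ov hρ hσ := by
  conv_lhs => rw [hρ.spectral_theorem, Unitary.conjStarAlgAut_apply]
  rw [ov, StarMul.star_mul, star_star]
  have : RCLike.ofReal ∘ hρ.eigenvalues = fun j => (hρ.eigenvalues j : ℂ) := rfl
  simp only [Matrix.mul_assoc, this]

lemma conj_entry (hρ : ρ.IsHermitian) (hσ : σ.IsHermitian) (k : I) :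
    ((star (hσ.eigenvectorUnitary : Matrix I I ℂ) * ρ * (hσ.eigenvectorUnitary : Matrix I I ℂ)) k k)
      = ∑ j, (hρ.eigenvalues j : ℂ) * (Complex.normSq (ov hρ hσ j k) : ℂ) := by
  rw [starV_mul_V hρ hσ, entry_WfW]

lemma sq_spectral (hρ : ρ.IsHermitian) :
    ρ * ρ = (hρ.eigenvectorUnitary : Matrix I I ℂ) *
      Matrix.diagonal (fun j => ((hρ.eigenvalues j : ℂ) * (hρ.eigenvalues j : ℂ))) *
      star (hρ.eigenvectorUnitary : Matrix I I ℂ) := by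
  conv_lhs => rw [hρ.spectral_theorem, Unitary.conjStarAlgAut_apply]
  have h1 : ∀ A B C D E : Matrix I I ℂ, (A * B * C) * (D * E * C) = A * (B * ((C * D) * E)) * C := by
    intro A B C D E; simp only [Matrix.mul_assoc]
  rw [h1, Matrix.UnitaryGroup.star_mul_self, Matrix.one_mul, Matrix.diagonal_mul_diagonal]
  rfl

lemma conj_entry_sq (hρ : ρ.IsHermitian) (hσ : σ.IsHermitian) (k : I) :
    ((star (hσ.eigenvectorUnitary : Matrix I I ℂ) * (ρ * ρ) * (hσ.eigenvectorUnitary : Matrix I I ℂ)) k k)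
      = ∑ j, ((hρ.eigenvalues j : ℂ) * (hρ.eigenvalues j : ℂ)) * (Complex.normSq (ov hρ hσ j k) : ℂ) := by
  have h := sq_spectral hρ
  conv_lhs => rw [h]
  have hov : ov hρ hσ = star (hρ.eigenvectorUnitary : Matrix I I ℂ) *
      (hσ.eigenvectorUnitary : Matrix I I ℂ) := rfl
  have hstar : star (ov hρ hσ) = star (hσ.eigenvectorUnitary : Matrix I I ℂ) *
      (hρ.eigenvectorUnitary : Matrix I I ℂ) := by
    rw [ov, StarMul.star_mul, star_star]
  have hre : star (hσ.eigenvectorUnitary : Matrix I I ℂ) *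
      ((hρ.eigenvectorUnitary : Matrix I I ℂ) *
        Matrix.diagonal (fun j => ((hρ.eigenvalues j : ℂ) * (hρ.eigenvalues j : ℂ))) *
        star (hρ.eigenvectorUnitary : Matrix I I ℂ)) * (hσ.eigenvectorUnitary : Matrix I I ℂ)
      = star (ov hρ hσ) *
        Matrix.diagonal (fun j => ((hρ.eigenvalues j : ℂ) * (hρ.eigenvalues j : ℂ))) *
        (ov hρ hσ) := by
    rw [hstar, hov]
    simp only [Matrix.mul_assoc]
  rw [hre, entry_WfW]

/-- main trace formula -/
lemma trace_mul_matLog (hσ : σ.IsHermitian) (M : Matrix I I ℂ) :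
    (M * matLog σ).trace = ∑ k, (Real.log (hσ.eigenvalues k) : ℂ) *
      ((star (hσ.eigenvectorUnitary : Matrix I I ℂ) * M * (hσ.eigenvectorUnitary : Matrix I I ℂ)) k k) := by
  rw [matLog_eq hσ, trace_mul_UDU]

lemma trace_mul_matLog_re (hρ : ρ.IsHermitian) (hσ : σ.IsHermitian) :
    (ρ * matLog σ).trace.re = ∑ k, ∑ j, Real.log (hσ.eigenvalues k) * hρ.eigenvalues j *
      Complex.normSq (ov hρ hσ j k) := by
  rw [trace_mul_matLog hσ ρ, Complex.re_sum]
  congr 1; ext k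
  rw [conj_entry hρ hσ k, Finset.mul_sum, Complex.re_sum]
  congr 1; ext j
  have : (Real.log (hσ.eigenvalues k) : ℂ) * ((hρ.eigenvalues j : ℂ) * (Complex.normSq (ov hρ hσ j k) : ℂ))
      = ((Real.log (hσ.eigenvalues k) * hρ.eigenvalues j * Complex.normSq (ov hρ hσ j k) : ℝ) : ℂ) := by
    push_cast; ring
  rw [this, Complex.ofReal_re]

lemma trace_mul_matLog_self_re (hρ : ρ.IsHermitian) :
    (ρ * matLog ρ).trace.re = ∑ j, hρ.eigenvalues j * Real.log (hρ.eigenvalues j) := by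
  rw [trace_mul_matLog hρ ρ, Complex.re_sum]
  congr 1; ext k
  rw [star_mul_self_mul_eq_diagonal' hρ]
  simp [Matrix.diagonal_apply_eq, RCLike.ofReal, ← Complex.ofReal_mul, mul_comm]

end Stmt12Aux

namespace Stmt12Aux

variable {I : Type*} [Fintype I] [DecidableEq I]

lemma diag_dominated (μ : I → ℝ) (hμ : ∀ k, 0 ≤ μ k) (a : Matrix I I ℂ) (ha : a.PosSemidef)
    (hd : (Matrix.diagonal (fun k => (μ k : ℂ)) - a).PosSemidef) :
    ∑ k, (if 0 < μ k then (∑ l, Complex.normSq (a l k)) / μ k else 0) ≤ a.trace.re := by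
  classical
  set ν : I → ℝ := fun k => if 0 < μ k then μ k else 1 with hνdef
  have hν : ∀ k, 0 < ν k := by
    intro k; by_cases h : 0 < μ k <;> simp [hνdef, h]
  set e : I → ℝ := fun k => (Real.sqrt (ν k))⁻¹ with hedef
  have he : ∀ k, 0 < e k := fun k => inv_pos.mpr (Real.sqrt_pos.mpr (hν k))
  have he2 : ∀ k, e k * e k * ν k = 1 := by
    intro k
    have h1 : Real.sqrt (ν k) * Real.sqrt (ν k) = ν k := Real.mul_self_sqrt (hν k).le
    have h3 : e k * e k = (ν k)⁻¹ := by
      simp only [hedef]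
      rw [← mul_inv, h1]
    rw [h3]
    exact inv_mul_cancel₀ (ne_of_gt (hν k))
  set E : Matrix I I ℂ := Matrix.diagonal (fun k => (e k : ℂ)) with hEdef
  have hE : Eᴴ = E := by
    ext i j
    rw [Matrix.conjTranspose_apply, hEdef]
    by_cases h : i = j
    · subst h; simp [Matrix.diagonal_apply_eq, Complex.conj_ofReal]
    · simp [Matrix.diagonal_apply, h, Ne.symm h]
  set b : Matrix I I ℂ := E * a * E with hbdef
  have hb : b.PosSemidef := by
    have := ha.mul_mul_conjTranspose_same E
    rwa [hE] at this
  have hdiagν : (Matrix.diagonal (fun k => (ν k : ℂ)) - a).PosSemidef := by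
    have hdsum : Matrix.diagonal (fun k => (ν k : ℂ))
        = Matrix.diagonal (fun k => (μ k : ℂ))
          + Matrix.diagonal (fun k => ((ν k - μ k : ℝ) : ℂ)) := by
      ext i j
      by_cases h : i = j
      · subst h
        simp only [Matrix.diagonal_apply_eq, Matrix.add_apply]
        push_cast; ring
      · simp [Matrix.diagonal_apply_ne _ h]
    have heq : Matrix.diagonal (fun k => (ν k : ℂ)) - a
        = (Matrix.diagonal (fun k => (μ k : ℂ)) - a)
          + Matrix.diagonal (fun k => ((ν k - μ k : ℝ) : ℂ)) := by
      rw [hdsum]; abel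
    rw [heq]
    refine hd.add (Matrix.PosSemidef.diagonal (fun k => ?_))
    show (0 : ℂ) ≤ _
    rw [nonneg_complex_iff]
    refine ⟨?_, by simp⟩
    simp only [Complex.ofReal_re]
    by_cases h : 0 < μ k <;> simp [hνdef, h] <;> linarith [hμ k, h]
  have hE1 : E * Matrix.diagonal (fun k => (ν k : ℂ)) * E = 1 := by
    rw [hEdef, Matrix.diagonal_mul_diagonal, Matrix.diagonal_mul_diagonal]
    have : (fun k => (e k : ℂ) * (ν k : ℂ) * (e k : ℂ)) = fun _ => (1 : ℂ) := by
      funext k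
      push_cast [← Complex.ofReal_mul]
      rw [← Complex.ofReal_one, ← he2 k]
      push_cast; ring
    rw [this, Matrix.diagonal_one]
  have h1b : (1 - b).PosSemidef := by
    have heq : (1 : Matrix I I ℂ) - b = E * (Matrix.diagonal (fun k => (ν k : ℂ)) - a) * E := by
      rw [Matrix.mul_sub, Matrix.sub_mul, hE1, hbdef]
    rw [heq]
    have := hdiagν.mul_mul_conjTranspose_same E
    rwa [hE] at this
  have hbb : (b - b * b).PosSemidef := by
    open scoped MatrixOrder in
    set s := CFC.sqrt b with hsdef
    open scoped MatrixOrder in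
    have hs : s * s = b := CFC.sqrt_mul_sqrt_self b hb.nonneg
    open scoped MatrixOrder in
    have hsh : sᴴ = s := (Matrix.nonneg_iff_posSemidef.mp (CFC.sqrt_nonneg b)).1
    have h2 : s * b * s = b * b := by
      conv_lhs => rw [← hs]
      conv_rhs => rw [← hs]
      simp only [Matrix.mul_assoc]
    have heq : s * (1 - b) * s = b - b * b := by
      calc s * (1 - b) * s = s * s - s * b * s := by
            rw [Matrix.mul_sub, Matrix.mul_one, Matrix.sub_mul]
        _ = b - b * b := by rw [hs, h2]
    rw [← heq]
    have := h1b.mul_mul_conjTranspose_same s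
    rwa [hsh] at this
  have hdiagPSD : (Matrix.diagonal (fun k => (ν k : ℂ))).PosSemidef := by
    refine Matrix.PosSemidef.diagonal (fun k => ?_)
    show (0 : ℂ) ≤ _
    rw [nonneg_complex_iff]
    exact ⟨by simp [(hν k).le], by simp⟩
  have key := trace_mul_psd_nonneg hbb hdiagPSD
  -- entries of b
  have hbent : ∀ l k, b l k = (e l : ℂ) * a l k * (e k : ℂ) := by
    intro l k
    simp only [hbdef, hEdef, Matrix.mul_diagonal, Matrix.diagonal_mul]
  -- trace pieces
  have tb : (b * Matrix.diagonal (fun k => (ν k : ℂ))).trace.re = a.trace.re := by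
    rw [Matrix.trace, Complex.re_sum, Matrix.trace, Complex.re_sum]
    congr 1; ext k
    rw [Matrix.diag, Matrix.mul_diagonal, hbent k k]
    have : (e k : ℂ) * a k k * (e k : ℂ) * (ν k : ℂ) = ((e k * e k * ν k : ℝ) : ℂ) * a k k := by
      push_cast; ring
    rw [this, he2]
    simp
  have tbb : ((b * b) * Matrix.diagonal (fun k => (ν k : ℂ))).trace.re
      = ∑ k, ∑ l, Complex.normSq (a l k) * (ν l)⁻¹ := by
    rw [Matrix.trace, Complex.re_sum]
    congr 1; ext k
    rw [Matrix.diag, Matrix.mul_diagonal, Matrix.mul_apply, Finset.sum_mul, Complex.re_sum]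
    congr 1; ext l
    rw [hbent k l, hbent l k]
    have hherm : a k l = star (a l k) := by
      conv_lhs => rw [← ha.1]
      rw [Matrix.conjTranspose_apply]
    rw [hherm]
    have : (e k : ℂ) * star (a l k) * (e l : ℂ) * ((e l : ℂ) * a l k * (e k : ℂ)) * (ν k : ℂ)
        = ((e k * e k * ν k : ℝ) : ℂ) * ((e l * e l : ℝ) : ℂ) * (star (a l k) * a l k) := by
      push_cast; ring
    have hel : e l * e l = (ν l)⁻¹ := by
      have hνne : ν l ≠ 0 := ne_of_gt (hν l)
      field_simp
      linarith [he2 l]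
    rw [this, he2, hel, Complex.star_def, ← Complex.normSq_eq_conj_mul_self]
    push_cast
    simp [mul_comm]
  -- combine
  have hmain : ∑ k, ∑ l, Complex.normSq (a l k) * (ν l)⁻¹ ≤ a.trace.re := by
    have hsplit : ((b - b * b) * Matrix.diagonal (fun k => (ν k : ℂ))).trace.re
        = (b * Matrix.diagonal (fun k => (ν k : ℂ))).trace.re
          - ((b * b) * Matrix.diagonal (fun k => (ν k : ℂ))).trace.re := by
      rw [Matrix.sub_mul, Matrix.trace_sub, Complex.sub_re]
    rw [hsplit, tb, tbb] at key
    linarith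
  refine le_trans ?_ hmain
  have hswap : ∑ k, ∑ l, Complex.normSq (a l k) * (ν l)⁻¹
      = ∑ k, ∑ l, Complex.normSq (a l k) * (ν k)⁻¹ := by
    rw [Finset.sum_comm]
    congr 1; ext k
    congr 1; ext l
    have : Complex.normSq (a k l) = Complex.normSq (a l k) := by
      have hherm : a k l = star (a l k) := by
        conv_lhs => rw [← ha.1]
        rw [Matrix.conjTranspose_apply]
      rw [hherm, Complex.star_def, Complex.normSq_conj]
    rw [this]
  rw [hswap]
  refine Finset.sum_le_sum ?_
  intro k _
  by_cases h : 0 < μ k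
  · have : ν k = μ k := by simp [hνdef, h]
    rw [if_pos h, this, div_eq_mul_inv, Finset.sum_mul]
  · rw [if_neg h]
    refine Finset.sum_nonneg ?_
    intro l _
    exact mul_nonneg (Complex.normSq_nonneg _) (inv_nonneg.mpr (hν k).le)

end Stmt12Aux

namespace Stmt12Aux

variable {I : Type*} [Fintype I] [DecidableEq I]

lemma scalar_mono {lam w mu c : ℝ} (hlam : 0 ≤ lam) (hw : 0 ≤ w) (hc : 0 < c)
    (hzero : ¬ 0 < mu → lam * w = 0) :
    (if 0 < mu then lam * w - c * (lam ^ 2 * w) / mu else 0)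
      ≤ lam * w * (Real.log mu - Real.log c - Real.log lam) := by
  by_cases hmu : 0 < mu
  · rw [if_pos hmu]
    rcases eq_or_lt_of_le hlam with h0 | hlam'
    · rw [← h0]; simp
    rcases eq_or_lt_of_le hw with h0 | hw'
    · rw [← h0]; simp
    have hx : 0 < c * lam / mu := by positivity
    have hlog := Real.log_le_sub_one_of_pos hx
    have hlogeq : Real.log (c * lam / mu) = Real.log c + Real.log lam - Real.log mu := by
      rw [Real.log_div (by positivity) (ne_of_gt hmu), Real.log_mul (ne_of_gt hc) (ne_of_gt hlam')]
    rw [hlogeq] at hlog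
    have hkey : 1 - c * lam / mu ≤ Real.log mu - Real.log c - Real.log lam := by linarith
    have heq : lam * w * (1 - c * lam / mu) = lam * w - c * (lam ^ 2 * w) / mu := by
      field_simp
    calc lam * w - c * (lam ^ 2 * w) / mu = lam * w * (1 - c * lam / mu) := heq.symm
      _ ≤ lam * w * (Real.log mu - Real.log c - Real.log lam) :=
          mul_le_mul_of_nonneg_left hkey (by positivity)
  · rw [if_neg hmu]
    have h := hzero hmu
    rw [h]
    simp

lemma scalar_klein {lam mu w : ℝ} (hlam : 0 ≤ lam) (hmu : 0 ≤ mu) (hw : 0 ≤ w)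
    (hzero : mu = 0 → lam * w = 0) :
    w * lam - w * mu ≤ lam * w * Real.log lam - lam * w * Real.log mu := by
  rcases eq_or_lt_of_le hmu with h0 | hmu'
  · have h := hzero h0.symm
    rw [← h0]
    have h' : w * lam = 0 := by rw [mul_comm]; exact h
    rw [h']
    simp [mul_comm, h]
  · rcases eq_or_lt_of_le hlam with h0 | hlam'
    · rw [← h0]
      simp
      positivity
    · have hx : 0 < mu / lam := by positivity
      have hlog := Real.log_le_sub_one_of_pos hx
      have hlogeq : Real.log (mu / lam) = Real.log mu - Real.log lam := by
        rw [Real.log_div (ne_of_gt hmu') (ne_of_gt hlam')]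
      rw [hlogeq] at hlog
      have h2 : lam * (Real.log mu - Real.log lam) ≤ mu - lam := by
        have := mul_le_mul_of_nonneg_left hlog hlam
        calc lam * (Real.log mu - Real.log lam) ≤ lam * (mu / lam - 1) := by nlinarith
          _ = mu - lam := by field_simp
      nlinarith [mul_le_mul_of_nonneg_left h2 hw]

end Stmt12Aux

namespace Stmt12Aux

variable {I : Type*} [Fintype I] [DecidableEq I]

lemma quad_entry (M V : Matrix I I ℂ) (k : I) :
    (star V * M * V) k k = star (fun i => V i k) ⬝ᵥ (M *ᵥ (fun i => V i k)) := by
  simp only [Matrix.mul_apply, Matrix.star_eq_conjTranspose, Matrix.conjTranspose_apply,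
    dotProduct, Matrix.mulVec, Pi.star_apply, Finset.sum_mul, Finset.mul_sum]
  rw [Finset.sum_comm]
  congr 1; ext i
  congr 1; ext x
  ring

lemma eigencol_mulVec {τ : Matrix I I ℂ} (hτ : τ.IsHermitian) (k : I) :
    τ *ᵥ (fun i => (hτ.eigenvectorUnitary : Matrix I I ℂ) i k)
      = hτ.eigenvalues k • (fun i => (hτ.eigenvectorUnitary : Matrix I I ℂ) i k) := by
  have hfun : (fun i => (hτ.eigenvectorUnitary : Matrix I I ℂ) i k) = ⇑(hτ.eigenvectorBasis k) := by
    funext i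
    exact hτ.eigenvectorUnitary_apply i k
  rw [hfun]
  exact hτ.mulVec_eigenvectorBasis k

/-- Klein-type inequality. -/
lemma klein_aux {ρ τ : Matrix I I ℂ} (hρ : ρ.PosSemidef) (hτ : τ.PosSemidef)
    (hker : ∀ v : I → ℂ, τ *ᵥ v = 0 → star v ⬝ᵥ (ρ *ᵥ v) = 0) :
    ρ.trace.re - τ.trace.re ≤ (ρ * matLog ρ).trace.re - (ρ * matLog τ).trace.re := by
  classical
  have hρh := hρ.1
  have hτh := hτ.1
  set lam : I → ℝ := hρh.eigenvalues with hlam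
  set mu : I → ℝ := hτh.eigenvalues with hmu
  set w : I → I → ℝ := fun j k => Complex.normSq (ov hρh hτh j k) with hw
  have hwnn : ∀ j k, 0 ≤ w j k := fun j k => Complex.normSq_nonneg _
  have hlamnn : ∀ j, 0 ≤ lam j := fun j => hρ.eigenvalues_nonneg j
  have hmunn : ∀ k, 0 ≤ mu k := fun k => hτ.eigenvalues_nonneg k
  -- the diagonal entries of the conjugated ρ, real version
  have hrk : ∀ k, ((star (hτh.eigenvectorUnitary : Matrix I I ℂ) * ρ *
      (hτh.eigenvectorUnitary : Matrix I I ℂ)) k k).re = ∑ j, lam j * w j k := by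
    intro k
    rw [conj_entry hρh hτh k, Complex.re_sum]
    congr 1; ext j
    rw [← Complex.ofReal_mul, Complex.ofReal_re]
  have hr0 : ∀ k, mu k = 0 → ∀ j, lam j * w j k = 0 := by
    intro k hk
    have hcol : τ *ᵥ (fun i => (hτh.eigenvectorUnitary : Matrix I I ℂ) i k) = 0 := by
      rw [eigencol_mulVec hτh k]
      have : mu k • (fun i => (hτh.eigenvectorUnitary : Matrix I I ℂ) i k)
          = (0 : ℝ) • (fun i => (hτh.eigenvectorUnitary : Matrix I I ℂ) i k) := by rw [hk]
      rw [show hτh.eigenvalues k = mu k from rfl, this, zero_smul]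
    have hq := hker _ hcol
    have hzero : ∑ j, lam j * w j k = 0 := by
      rw [← hrk k, quad_entry, hq]
      simp
    intro j
    exact (Finset.sum_eq_zero_iff_of_nonneg
      (fun j _ => mul_nonneg (hlamnn j) (hwnn j k))).mp hzero j (Finset.mem_univ j)
  -- sums
  have hsum1 : ∑ k, ∑ j, (w j k * lam j - w j k * mu k) = ρ.trace.re - τ.trace.re := by
    have h1 : ∑ k, ∑ j, w j k * lam j = ρ.trace.re := by
      rw [Finset.sum_comm]
      have : ∀ j, ∑ k, w j k * lam j = lam j := by
        intro j
        rw [← Finset.sum_mul, sum_normSq_ov_right hρh hτh j, one_mul]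
      rw [Finset.sum_congr rfl (fun j _ => this j)]
      rw [trace_eq_sum_eigen hρh, Complex.re_sum]
      simp; rfl
    have h2 : ∑ k, ∑ j, w j k * mu k = τ.trace.re := by
      have : ∀ k, ∑ j, w j k * mu k = mu k := by
        intro k
        rw [← Finset.sum_mul, sum_normSq_ov_left hρh hτh k, one_mul]
      rw [Finset.sum_congr rfl (fun k _ => this k)]
      rw [trace_eq_sum_eigen hτh, Complex.re_sum]
      simp; rfl
    rw [← h1, ← h2, ← Finset.sum_sub_distrib]
    congr 1; ext k
    rw [← Finset.sum_sub_distrib]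
  have hsum2 : ∑ k, ∑ j, (lam j * w j k * Real.log (lam j) - lam j * w j k * Real.log (mu k))
      = (ρ * matLog ρ).trace.re - (ρ * matLog τ).trace.re := by
    have h1 : ∑ k, ∑ j, lam j * w j k * Real.log (lam j) = (ρ * matLog ρ).trace.re := by
      rw [trace_mul_matLog_self_re hρh, Finset.sum_comm]
      congr 1; ext j
      have hterm : ∀ k, lam j * w j k * Real.log (lam j)
          = (lam j * Real.log (lam j)) * w j k := fun k => by ring
      rw [Finset.sum_congr rfl (fun k _ => hterm k), ← Finset.mul_sum,
        sum_normSq_ov_right hρh hτh j, mul_one]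
    have h2 : ∑ k, ∑ j, lam j * w j k * Real.log (mu k) = (ρ * matLog τ).trace.re := by
      rw [trace_mul_matLog_re hρh hτh]
      congr 1; ext k
      congr 1; ext j
      ring
    rw [← h1, ← h2, ← Finset.sum_sub_distrib]
    congr 1; ext k
    rw [← Finset.sum_sub_distrib]
  calc ρ.trace.re - τ.trace.re = ∑ k, ∑ j, (w j k * lam j - w j k * mu k) := hsum1.symm
    _ ≤ ∑ k, ∑ j, (lam j * w j k * Real.log (lam j) - lam j * w j k * Real.log (mu k)) := by
        refine Finset.sum_le_sum fun k _ => Finset.sum_le_sum fun j _ => ?_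
        exact scalar_klein (hlamnn j) (hmunn k) (hwnn j k) (fun h => hr0 k h j)
    _ = _ := hsum2

end Stmt12Aux

namespace Stmt12Aux

variable {I : Type*} [Fintype I] [DecidableEq I]

lemma trace_log_mono {ρ σ : Matrix I I ℂ} (hρ : ρ.PosSemidef) (hσ : σ.PosSemidef)
    {c : ℝ} (hc : 0 < c) (hle : (σ - c • ρ).PosSemidef) :
    Real.log c * ρ.trace.re + (ρ * matLog ρ).trace.re ≤ (ρ * matLog σ).trace.re := by
  classical
  have hρh := hρ.1
  have hσh := hσ.1
  set lam : I → ℝ := hρh.eigenvalues with hlamdef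
  set mu : I → ℝ := hσh.eigenvalues with hmudef
  set V : Matrix I I ℂ := (hσh.eigenvectorUnitary : Matrix I I ℂ) with hVdef
  set w : I → I → ℝ := fun j k => Complex.normSq (ov hρh hσh j k) with hwdef
  have hwnn : ∀ j k, 0 ≤ w j k := fun j k => Complex.normSq_nonneg _
  have hlamnn : ∀ j, 0 ≤ lam j := fun j => hρ.eigenvalues_nonneg j
  have hmunn : ∀ k, 0 ≤ mu k := fun k => hσ.eigenvalues_nonneg k
  have hVV : V * star V = 1 := Matrix.mem_unitaryGroup_iff.mp (hσh.eigenvectorUnitary).2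
  set a : Matrix I I ℂ := star V * ρ * V with hadef
  have haPSD : a.PosSemidef := by
    have := hρ.conjTranspose_mul_mul_same V
    rwa [← Matrix.star_eq_conjTranspose] at this
  have hVsig : star V * σ * V = Matrix.diagonal (fun k => (mu k : ℂ)) := by
    exact star_mul_self_mul_eq_diagonal' hσh
  have hconj : star V * (σ - c • ρ) * V = Matrix.diagonal (fun k => (mu k : ℂ)) - c • a := by
    have h1 : star V * (σ - c • ρ) = star V * σ - c • (star V * ρ) := by
      rw [Matrix.mul_sub, Matrix.mul_smul]
    rw [h1, Matrix.sub_mul, Matrix.smul_mul, hVsig, hadef]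
  have hdom : (Matrix.diagonal (fun k => (mu k : ℂ)) - c • a).PosSemidef := by
    have := hle.conjTranspose_mul_mul_same V
    rw [← Matrix.star_eq_conjTranspose, hconj] at this
    exact this
  -- diagonal entries of a
  have hrk : ∀ k, (a k k).re = ∑ j, lam j * w j k := by
    intro k
    rw [hadef, conj_entry hρh hσh k, Complex.re_sum]
    congr 1; ext j
    rw [← Complex.ofReal_mul, Complex.ofReal_re]
  have hr0 : ∀ k, ¬ 0 < mu k → ∀ j, lam j * w j k = 0 := by
    intro k hk
    have hmu0 : mu k = 0 := le_antisymm (not_lt.mp hk) (hmunn k)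
    have hdg := psd_diag_re_nonneg hdom k
    have hdge : ((Matrix.diagonal (fun k => (mu k : ℂ)) - c • a) k k).re
        = mu k - c * (a k k).re := by
      simp [Matrix.sub_apply, Matrix.diagonal_apply_eq, Matrix.smul_apply, Complex.sub_re,
        Complex.real_smul, Complex.mul_re]
    rw [hdge, hmu0] at hdg
    have hrknn : 0 ≤ (a k k).re := by
      rw [hrk k]
      exact Finset.sum_nonneg fun j _ => mul_nonneg (hlamnn j) (hwnn j k)
    have hrk0 : (a k k).re = 0 := by nlinarith
    rw [hrk k] at hrk0
    intro j
    exact (Finset.sum_eq_zero_iff_of_nonneg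
      (fun j _ => mul_nonneg (hlamnn j) (hwnn j k))).mp hrk0 j (Finset.mem_univ j)
  -- Hermitian of a, a*a entries
  have haH : a.IsHermitian := haPSD.1
  have hmul : a * a = star V * (ρ * ρ) * V := by
    have h2 : V * (star V * (ρ * V)) = ρ * V := by
      rw [← Matrix.mul_assoc, hVV, Matrix.one_mul]
    rw [hadef]
    calc star V * ρ * V * (star V * ρ * V)
        = star V * (ρ * (V * (star V * (ρ * V)))) := by simp only [Matrix.mul_assoc]
      _ = star V * (ρ * (ρ * V)) := by rw [h2]
      _ = star V * (ρ * ρ) * V := by simp only [Matrix.mul_assoc]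
  have hdiagsq : ∀ k, ((a * a) k k) = ∑ l, (Complex.normSq (a l k) : ℂ) := by
    intro k
    rw [Matrix.mul_apply]
    congr 1; ext l
    have h3 : a k l = star (a l k) := by
      conv_lhs => rw [← haH]
      rw [Matrix.conjTranspose_apply]
    rw [h3, Complex.star_def, ← Complex.normSq_eq_conj_mul_self]
  have hA2 : ∀ k, ∑ l, Complex.normSq (a l k) = ∑ j, lam j ^ 2 * w j k := by
    intro k
    have hc1 : (∑ l, (Complex.normSq (a l k) : ℂ))
        = ∑ j, ((lam j : ℂ) * (lam j : ℂ)) * (w j k : ℂ) := by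
      rw [← hdiagsq k, hmul, conj_entry_sq hρh hσh k]
    have := congrArg Complex.re hc1
    rw [Complex.re_sum, Complex.re_sum] at this
    calc ∑ l, Complex.normSq (a l k) = ∑ l, ((Complex.normSq (a l k) : ℂ)).re := by
          simp
      _ = ∑ j, (((lam j : ℂ) * (lam j : ℂ)) * (w j k : ℂ)).re := this
      _ = ∑ j, lam j ^ 2 * w j k := by
          refine Finset.sum_congr rfl fun j _ => ?_
          rw [← Complex.ofReal_mul, ← Complex.ofReal_mul, Complex.ofReal_re, sq]
  -- trace of c • a
  have htra : ((c : ℝ) • a).trace.re = c * ρ.trace.re := by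
    have h1 : a.trace = ρ.trace := by
      rw [hadef, Matrix.trace_mul_cycle, hVV, Matrix.one_mul]
    rw [Matrix.trace_smul, Complex.real_smul, h1]
    simp [Complex.mul_re]
  -- apply diagonal domination
  have hDD := diag_dominated mu hmunn ((c : ℝ) • a) (smul_posSemidef haPSD hc.le) hdom
  -- rewrite hDD in eigen language
  have hqs : ∀ k, ∑ l, Complex.normSq (((c : ℝ) • a) l k) = c ^ 2 * ∑ j, lam j ^ 2 * w j k := by
    intro k
    rw [← hA2 k, Finset.mul_sum]
    congr 1; ext l
    rw [Matrix.smul_apply, Complex.real_smul, Complex.normSq_mul, Complex.normSq_ofReal]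
    ring
  have hDD' : ∑ k, (if 0 < mu k then (c ^ 2 * ∑ j, lam j ^ 2 * w j k) / mu k else 0)
      ≤ c * ρ.trace.re := by
    rw [← htra]
    refine le_trans (le_of_eq (Finset.sum_congr rfl fun k _ => ?_)) hDD
    rw [hqs k]
  -- the lower bound sum
  have hLB : 0 ≤ ∑ k, ∑ j, (if 0 < mu k then lam j * w j k - c * (lam j ^ 2 * w j k) / mu k else 0) := by
    have hsplit : ∀ k, ∑ j, (if 0 < mu k then lam j * w j k - c * (lam j ^ 2 * w j k) / mu k else 0)
        = (if 0 < mu k then ∑ j, lam j * w j k else 0)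
          - (if 0 < mu k then (c * ∑ j, lam j ^ 2 * w j k) / mu k else 0) := by
      intro k
      by_cases h : 0 < mu k
      · simp only [if_pos h]
        rw [Finset.sum_sub_distrib]
        congr 1
        rw [Finset.mul_sum, Finset.sum_div]
      · simp [if_neg h]
    rw [Finset.sum_congr rfl (fun k _ => hsplit k), Finset.sum_sub_distrib]
    have hA : ∑ k, (if 0 < mu k then ∑ j, lam j * w j k else 0) = ρ.trace.re := by
      have h1 : ∀ k, (if 0 < mu k then ∑ j, lam j * w j k else 0) = ∑ j, lam j * w j k := by
        intro k
        by_cases h : 0 < mu k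
        · rw [if_pos h]
        · rw [if_neg h]
          exact (Finset.sum_eq_zero fun j _ => hr0 k h j).symm
      rw [Finset.sum_congr rfl (fun k _ => h1 k), Finset.sum_comm]
      have h2 : ∀ j, ∑ k, lam j * w j k = lam j := by
        intro j; rw [← Finset.mul_sum, sum_normSq_ov_right hρh hσh j, mul_one]
      rw [Finset.sum_congr rfl (fun j _ => h2 j), trace_eq_sum_eigen hρh, Complex.re_sum]
      simp; rfl
    have hB : ∑ k, (if 0 < mu k then (c * ∑ j, lam j ^ 2 * w j k) / mu k else 0) ≤ ρ.trace.re := by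
      have h1 : ∀ k, (if 0 < mu k then (c * ∑ j, lam j ^ 2 * w j k) / mu k else 0)
          = (1/c) * (if 0 < mu k then (c ^ 2 * ∑ j, lam j ^ 2 * w j k) / mu k else 0) := by
        intro k
        by_cases h : 0 < mu k
        · rw [if_pos h, if_pos h]
          field_simp
        · simp [if_neg h]
      rw [Finset.sum_congr rfl (fun k _ => h1 k), ← Finset.mul_sum]
      calc (1/c) * ∑ k, (if 0 < mu k then (c ^ 2 * ∑ j, lam j ^ 2 * w j k) / mu k else 0)
          ≤ (1/c) * (c * ρ.trace.re) := by
            exact mul_le_mul_of_nonneg_left hDD' (by positivity)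
        _ = ρ.trace.re := by field_simp
    linarith [hA, hB]
  -- identify the sums with traces
  have hS1 : ∑ k, ∑ j, lam j * w j k * Real.log (mu k) = (ρ * matLog σ).trace.re := by
    rw [trace_mul_matLog_re hρh hσh]
    exact Finset.sum_congr rfl fun k _ => Finset.sum_congr rfl fun j _ => by ring
  have htrre : ρ.trace.re = ∑ j, lam j := by
    rw [trace_eq_sum_eigen hρh, Complex.re_sum]; simp; rfl
  have hS2 : ∑ k, ∑ j, lam j * w j k * Real.log c = Real.log c * ρ.trace.re := by
    rw [Finset.sum_comm]
    have h2 : ∀ j, ∑ k, lam j * w j k * Real.log c = lam j * Real.log c := by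
      intro j
      have hterm : ∀ k, lam j * w j k * Real.log c = (lam j * Real.log c) * w j k :=
        fun k => by ring
      rw [Finset.sum_congr rfl fun k _ => hterm k, ← Finset.mul_sum,
        sum_normSq_ov_right hρh hσh j, mul_one]
    rw [Finset.sum_congr rfl fun j _ => h2 j, htrre, Finset.mul_sum]
    exact Finset.sum_congr rfl fun j _ => by ring
  have hS3 : ∑ k, ∑ j, lam j * w j k * Real.log (lam j) = (ρ * matLog ρ).trace.re := by
    rw [trace_mul_matLog_self_re hρh, Finset.sum_comm]
    refine Finset.sum_congr rfl fun j _ => ?_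
    have hterm : ∀ k, lam j * w j k * Real.log (lam j) = (lam j * Real.log (lam j)) * w j k :=
      fun k => by ring
    rw [Finset.sum_congr rfl fun k _ => hterm k, ← Finset.mul_sum,
      sum_normSq_ov_right hρh hσh j, mul_one]
  have hstep : ∑ k, ∑ j, (if 0 < mu k then lam j * w j k - c * (lam j ^ 2 * w j k) / mu k else 0)
      ≤ ∑ k, ∑ j, lam j * w j k * (Real.log (mu k) - Real.log c - Real.log (lam j)) :=
    Finset.sum_le_sum fun k _ => Finset.sum_le_sum fun j _ =>
      scalar_mono (hlamnn j) (hwnn j k) hc (fun h => hr0 k h j)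
  have hexp : ∑ k, ∑ j, lam j * w j k * (Real.log (mu k) - Real.log c - Real.log (lam j))
      = (∑ k, ∑ j, lam j * w j k * Real.log (mu k))
        - (∑ k, ∑ j, lam j * w j k * Real.log c)
        - (∑ k, ∑ j, lam j * w j k * Real.log (lam j)) := by
    rw [← Finset.sum_sub_distrib, ← Finset.sum_sub_distrib]
    refine Finset.sum_congr rfl fun k _ => ?_
    rw [← Finset.sum_sub_distrib, ← Finset.sum_sub_distrib]
    refine Finset.sum_congr rfl fun j _ => ?_
    ring
  rw [hexp, hS1, hS2, hS3] at hstep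
  linarith [hLB, hstep]

end Stmt12Aux

namespace Stmt12Aux

variable {I : Type*} [Fintype I] [DecidableEq I]

lemma mulVec_zero_of_le {X Y : Matrix I I ℂ} (hX : X.PosSemidef) (hle : (Y - X).PosSemidef)
    {v : I → ℂ} (hv : Y *ᵥ v = 0) : X *ᵥ v = 0 := by
  have h1 : star v ⬝ᵥ ((Y - X) *ᵥ v) = - (star v ⬝ᵥ (X *ᵥ v)) := by
    rw [Matrix.sub_mulVec, dotProduct_sub, hv]
    simp
  have h2 := hle.dotProduct_mulVec_nonneg v
  rw [h1] at h2
  have h3 := hX.dotProduct_mulVec_nonneg v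
  have h4 : star v ⬝ᵥ (X *ᵥ v) = 0 := le_antisymm (by rwa [← neg_nonneg]) h3
  exact (hX.dotProduct_mulVec_zero_iff v).mp h4

lemma dot_zero_of_range_subset {σ τ : Matrix I I ℂ} (hτ : τ.IsHermitian)
    (hsub : Set.range σ.mulVec ⊆ Set.range τ.mulVec) {v : I → ℂ} (hv : τ *ᵥ v = 0) :
    star v ⬝ᵥ (σ *ᵥ v) = 0 := by
  obtain ⟨y, hy⟩ := hsub (Set.mem_range_self v)
  rw [← hy, dotProduct_mulVec]
  have hz : star v ᵥ* τ = 0 := by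
    have := Matrix.star_mulVec (M := τ) (v := v)
    rw [hτ.eq] at this
    rw [← this, hv]
    simp
  rw [hz]
  simp

lemma range_mulVec_subset {X Y : Matrix I I ℂ} (hX : X.PosSemidef) (hY : Y.PosSemidef)
    (hle : (Y - X).PosSemidef) :
    Set.range X.mulVec ⊆ Set.range Y.mulVec := by
  classical
  rintro _ ⟨v, rfl⟩
  have hYh := hY.1
  set U : Matrix I I ℂ := (hYh.eigenvectorUnitary : Matrix I I ℂ) with hUdef
  set mu : I → ℝ := hYh.eigenvalues with hmudef
  have hUU : U * star U = 1 := Matrix.mem_unitaryGroup_iff.mp (hYh.eigenvectorUnitary).2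
  have hU'U : star U * U = 1 := Matrix.UnitaryGroup.star_mul_self _
  set chi : I → ℂ := fun k => if mu k = 0 then 0 else 1 with hchidef
  set pinv : I → ℂ := fun k => if mu k = 0 then 0 else ((mu k : ℂ))⁻¹ with hpinvdef
  set Yp : Matrix I I ℂ := U * Matrix.diagonal pinv * star U with hYpdef
  have hYYp : Y * Yp = U * Matrix.diagonal chi * star U := by
    conv_lhs => rw [hYh.spectral_theorem, Unitary.conjStarAlgAut_apply]
    rw [hYpdef]
    have h1 : (U * Matrix.diagonal (RCLike.ofReal ∘ hYh.eigenvalues) * star U) *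
        (U * Matrix.diagonal pinv * star U)
        = U * (Matrix.diagonal (RCLike.ofReal ∘ hYh.eigenvalues) * ((star U * U) *
            (Matrix.diagonal pinv))) * star U := by
      simp only [Matrix.mul_assoc]
    rw [h1, hU'U, Matrix.one_mul, Matrix.diagonal_mul_diagonal]
    have hfun : (fun k => (RCLike.ofReal ∘ hYh.eigenvalues) k * pinv k) = chi := by
      funext k
      by_cases h : mu k = 0
      · simp [hpinvdef, hchidef, h]
      · have hne : ((mu k : ℂ)) ≠ 0 := Complex.ofReal_ne_zero.mpr h
        simp only [Function.comp_apply, hpinvdef, hchidef, if_neg h]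
        rw [show hYh.eigenvalues k = mu k from rfl]
        field_simp; rfl
    rw [hfun]
  -- for zero eigenvalues, columns are killed by X
  have hcolX : ∀ k, mu k = 0 → X *ᵥ (fun i => U i k) = 0 := by
    intro k hk
    have hcol : Y *ᵥ (fun i => U i k) = 0 := by
      rw [hUdef, eigencol_mulVec hYh k]
      rw [show hYh.eigenvalues k = mu k from rfl, hk, zero_smul]
    exact mulVec_zero_of_le hX hle hcol
  have hPX : (U * Matrix.diagonal chi * star U) * X = X := by
    have hXid : U * (star U * X) = X := by
      rw [← Matrix.mul_assoc, hUU, Matrix.one_mul]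
    have hDN : Matrix.diagonal chi * (star U * X) = star U * X := by
      ext k i
      rw [Matrix.diagonal_mul]
      by_cases h : mu k = 0
      · have hXv := hcolX k h
        have hNki : (star U * X) k i = 0 := by
          rw [Matrix.mul_apply]
          have hterm : ∀ j, (star U) k j * X j i = star (X i j * U j k) := by
            intro j
            rw [Matrix.star_eq_conjTranspose, Matrix.conjTranspose_apply]
            have hXji : X j i = star (X i j) := by
              conv_lhs => rw [← hX.1]
              rw [Matrix.conjTranspose_apply]
            rw [hXji, star_mul']
            ring
          rw [Finset.sum_congr rfl fun j _ => hterm j, ← star_sum]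
          have : ∑ j, X i j * U j k = (X *ᵥ (fun i' => U i' k)) i := by
            rw [Matrix.mulVec]
            rfl
          rw [this, hXv]
          simp
        rw [hNki]
        simp
      · simp [hchidef, h]
    calc (U * Matrix.diagonal chi * star U) * X
        = U * (Matrix.diagonal chi * (star U * X)) := by simp only [Matrix.mul_assoc]
      _ = U * (star U * X) := by rw [hDN]
      _ = X := hXid
  refine ⟨(Yp * X) *ᵥ v, ?_⟩
  rw [Matrix.mulVec_mulVec, ← Matrix.mul_assoc, hYYp, hPX]

end Stmt12Aux

namespace Stmt12Aux

lemma piKron_posSemidef {n : ℕ} {d : Fin n → ℕ} (P : ∀ s, Matrix (Fin (d s)) (Fin (d s)) ℂ)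
    (hP : ∀ s, (P s).PosSemidef) : (piKron P).PosSemidef := by
  classical
  choose B hB using fun s => psd_eq_ct_mul_self (hP s)
  have hkey : piKron P = (piKron B)ᴴ * piKron B := by
    ext i j
    rw [Matrix.mul_apply]
    simp only [piKron, Matrix.of_apply, Matrix.conjTranspose_apply]
    symm
    calc ∑ x : (∀ s, Fin (d s)), star (∏ s, B s (x s) (i s)) * ∏ s, B s (x s) (j s)
        = ∑ x : (∀ s, Fin (d s)), ∏ s, (star (B s (x s) (i s)) * B s (x s) (j s)) := by
          refine Finset.sum_congr rfl fun x _ => ?_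
          rw [star_prod, ← Finset.prod_mul_distrib]
      _ = ∏ s, ∑ y, star (B s y (i s)) * B s y (j s) := by
          rw [Finset.prod_univ_sum]
          rw [Fintype.piFinset_univ]
      _ = ∏ s, (P s) (i s) (j s) := by
          refine Finset.prod_congr rfl fun s _ => ?_
          rw [hB s, Matrix.mul_apply]
          refine Finset.sum_congr rfl fun y _ => ?_
          rw [Matrix.conjTranspose_apply]
  rw [hkey]
  exact Matrix.posSemidef_conjTranspose_mul_self _

lemma piKron_trace {n : ℕ} {d : Fin n → ℕ} (P : ∀ s, Matrix (Fin (d s)) (Fin (d s)) ℂ) :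
    (piKron P).trace = ∏ s, (P s).trace := by
  classical
  simp only [Matrix.trace, Matrix.diag, piKron, Matrix.of_apply]
  rw [Finset.prod_univ_sum, Fintype.piFinset_univ]

lemma isDensity_convex {I : Type*} [Fintype I] [DecidableEq I] :
    Convex ℝ {M : Matrix I I ℂ | M.IsDensity} := by
  intro x hx y hy p q hp hq hpq
  constructor
  · exact (smul_posSemidef hx.1 hp).add (smul_posSemidef hy.1 hq)
  · rw [Matrix.trace_add, Matrix.trace_smul, Matrix.trace_smul, hx.2, hy.2]
    rw [Complex.real_smul, Complex.real_smul, mul_one, mul_one, ← Complex.ofReal_add, hpq,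
      Complex.ofReal_one]

lemma sep_isDensity {n : ℕ} {d : Fin n → ℕ} {τ : Matrix (∀ s, Fin (d s)) (∀ s, Fin (d s)) ℂ}
    (h : IsSepState τ) : τ.IsDensity := by
  have hsub : {τ' : Matrix (∀ s, Fin (d s)) (∀ s, Fin (d s)) ℂ |
      ∃ P : ∀ s, Matrix (Fin (d s)) (Fin (d s)) ℂ, (∀ s, (P s).IsDensity) ∧ τ' = piKron P}
        ⊆ {M | M.IsDensity} := by
    rintro τ' ⟨P, hP, rfl⟩
    refine ⟨piKron_posSemidef P (fun s => (hP s).1), ?_⟩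
    rw [piKron_trace, Finset.prod_congr rfl fun s _ => (hP s).2, Finset.prod_const_one]
  exact convexHull_min hsub isDensity_convex h

end Stmt12Aux

namespace Stmt12Aux

variable {I : Type*} [Fintype I] [DecidableEq I]

lemma core_real {ρ σ τ : Matrix I I ℂ} (hρ : ρ.IsDensity) (hσ : σ.IsDensity)
    (hτ : τ.IsDensity) {c : ℝ} (hc0 : 0 < c) (hc1 : c < 1)
    (hle : (σ - c • ρ).PosSemidef)
    (hsub : Set.range σ.mulVec ⊆ Set.range τ.mulVec) :
    c * (ρ * (matLog ρ - matLog τ)).trace.re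
      ≤ (σ * (matLog σ - matLog τ)).trace.re
        + (-(c * Real.log c) - (1 - c) * Real.log (1 - c)) := by
  classical
  have h1c : 0 < 1 - c := by linarith
  have h1cne : (1 : ℝ) - c ≠ 0 := ne_of_gt h1c
  set ρ' : Matrix I I ℂ := (1 - c)⁻¹ • (σ - c • ρ) with hρ'def
  have hρ'PSD : ρ'.PosSemidef := smul_posSemidef hle (inv_nonneg.mpr h1c.le)
  have hdecomp : (1 - c) • ρ' = σ - c • ρ := by
    rw [hρ'def, smul_smul, mul_inv_cancel₀ h1cne, one_smul]
  have htrρ : ρ.trace.re = 1 := by rw [hρ.2]; simp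
  have htrσ : σ.trace.re = 1 := by rw [hσ.2]; simp
  have htrτ : τ.trace.re = 1 := by rw [hτ.2]; simp
  have htrρ'c : ρ'.trace = 1 := by
    rw [hρ'def, Matrix.trace_smul, Matrix.trace_sub, Matrix.trace_smul, hσ.2, hρ.2]
    rw [Complex.real_smul, Complex.real_smul, mul_one]
    rw [show (1 : ℂ) - (c : ℂ) = ((1 - c : ℝ) : ℂ) by push_cast; ring]
    rw [← Complex.ofReal_mul, inv_mul_cancel₀ h1cne, Complex.ofReal_one]
  have htrρ' : ρ'.trace.re = 1 := by rw [htrρ'c]; simp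
  -- Mono inequalities
  have hMono1 : Real.log c * ρ.trace.re + (ρ * matLog ρ).trace.re ≤ (ρ * matLog σ).trace.re :=
    trace_log_mono hρ.1 hσ.1 hc0 hle
  have hle2 : (σ - (1 - c) • ρ').PosSemidef := by
    rw [hdecomp, sub_sub_cancel]
    exact smul_posSemidef hρ.1 hc0.le
  have hMono2 : Real.log (1 - c) * ρ'.trace.re + (ρ' * matLog ρ').trace.re
      ≤ (ρ' * matLog σ).trace.re :=
    trace_log_mono hρ'PSD hσ.1 h1c hle2
  -- Klein inequality for ρ' vs τ
  have hker : ∀ v : I → ℂ, τ *ᵥ v = 0 → star v ⬝ᵥ (ρ' *ᵥ v) = 0 := by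
    intro v hv
    have hσv : star v ⬝ᵥ (σ *ᵥ v) = 0 := dot_zero_of_range_subset hτ.1.1 hsub hv
    have hρv : (0 : ℂ) ≤ star v ⬝ᵥ (ρ *ᵥ v) := hρ.1.dotProduct_mulVec_nonneg v
    have hsv : (0 : ℂ) ≤ star v ⬝ᵥ ((σ - c • ρ) *ᵥ v) := hle.dotProduct_mulVec_nonneg v
    have hexp : star v ⬝ᵥ ((σ - c • ρ) *ᵥ v)
        = - ((c : ℂ) * (star v ⬝ᵥ (ρ *ᵥ v))) := by
      rw [Matrix.sub_mulVec, dotProduct_sub, hσv, Matrix.smul_mulVec, dotProduct_smul]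
      rw [Complex.real_smul]
      ring
    rw [hexp] at hsv
    have hz : star v ⬝ᵥ (ρ *ᵥ v) = 0 := by
      rw [nonneg_complex_iff] at hρv hsv
      obtain ⟨h1, h2⟩ := hρv
      obtain ⟨h3, h4⟩ := hsv
      set z := star v ⬝ᵥ (ρ *ᵥ v)
      have him : z.im = 0 := by rw [eq_comm, ← h2]
      have hre9 : (-(( c : ℂ) * z)).re = -(c * z.re) := by
        simp [Complex.mul_re, him]
      rw [hre9] at h3
      have : z.re = 0 := by nlinarith
      exact Complex.ext this him
    rw [hρ'def, Matrix.smul_mulVec, dotProduct_smul, Matrix.sub_mulVec, dotProduct_sub,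
      hσv, Matrix.smul_mulVec, dotProduct_smul, hz]
    simp
  have hKlein := klein_aux hρ'PSD hτ.1 hker
  rw [htrρ', htrτ] at hKlein
  -- linearity of trace against matLog σ and matLog τ
  have hσeq : σ = c • ρ + (1 - c) • ρ' := by
    rw [hdecomp]
    abel
  have hlin : ∀ L : Matrix I I ℂ, (σ * L).trace.re
      = c * (ρ * L).trace.re + (1 - c) * (ρ' * L).trace.re := by
    intro L
    conv_lhs => rw [hσeq]
    rw [Matrix.add_mul, Matrix.smul_mul, Matrix.smul_mul, Matrix.trace_add, Matrix.trace_smul,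
      Matrix.trace_smul, Complex.add_re, Complex.real_smul, Complex.real_smul]
    simp [Complex.mul_re]
  have hlinσ := hlin (matLog σ)
  have hlinτ := hlin (matLog τ)
  -- expand the statement
  have hexpρ : (ρ * (matLog ρ - matLog τ)).trace.re
      = (ρ * matLog ρ).trace.re - (ρ * matLog τ).trace.re := by
    rw [Matrix.mul_sub, Matrix.trace_sub, Complex.sub_re]
  have hexpσ : (σ * (matLog σ - matLog τ)).trace.re
      = (σ * matLog σ).trace.re - (σ * matLog τ).trace.re := by
    rw [Matrix.mul_sub, Matrix.trace_sub, Complex.sub_re]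
  rw [hexpρ, hexpσ, hlinσ, hlinτ]
  rw [htrρ] at hMono1
  rw [htrρ'] at hMono2
  nlinarith [hKlein, hMono1, hMono2, h1c]
end Stmt12Aux

open Stmt12Aux in
/-- if `σ − cρ ≥ 0` with `c ∈ (0,1]` then `E_R(σ) ≥ c E_R(ρ) − h₂(c)`. -/
theorem statement12 {n : ℕ} {d : Fin n → ℕ}
    (ρ σ : Matrix (∀ s, Fin (d s)) (∀ s, Fin (d s)) ℂ) (hρ : ρ.IsDensity) (hσ : σ.IsDensity)
    (c : ℝ) (hc0 : 0 < c) (hc1 : c ≤ 1) (hle : (σ - c • ρ).PosSemidef) :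
    ENNReal.ofReal c * relEntEnt ρ ≤
      relEntEnt σ + ENNReal.ofReal (-(c * Real.log c) - (1 - c) * Real.log (1 - c)) := by
  classical
  by_cases hceq : c = 1
  · subst hceq
    have hσρ : σ = ρ := by
      have h0 : (σ - (1 : ℝ) • ρ).trace = 0 := by
        rw [Matrix.trace_sub, Matrix.trace_smul, hσ.2, hρ.2, one_smul, sub_self]
      have h2 := psd_trace_zero hle h0
      rw [one_smul] at h2
      exact sub_eq_zero.mp h2
    rw [hσρ]
    have hK : ENNReal.ofReal (-((1:ℝ) * Real.log 1) - (1 - 1) * Real.log (1 - 1)) = 0 := by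
      norm_num [Real.log_one]
    rw [hK, ENNReal.ofReal_one, one_mul, add_zero]
  · have hc1' : c < 1 := lt_of_le_of_ne hc1 hceq
    set K := ENNReal.ofReal (-(c * Real.log c) - (1 - c) * Real.log (1 - c)) with hKdef
    have key : ∀ τ', IsSepState τ' → ENNReal.ofReal c * relEntEnt ρ ≤ qRelEnt σ τ' + K := by
      intro τ' hsep
      by_cases hsb : Set.range σ.mulVec ⊆ Set.range τ'.mulVec
      · have hτD : τ'.IsDensity := sep_isDensity hsep
        have hsubρ : Set.range ρ.mulVec ⊆ Set.range τ'.mulVec := by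
          refine subset_trans (subset_trans ?_
            (range_mulVec_subset (smul_posSemidef hρ.1 hc0.le) hσ.1 hle)) hsb
          rintro _ ⟨v, rfl⟩
          refine ⟨c⁻¹ • v, ?_⟩
          rw [Matrix.smul_mulVec, Matrix.mulVec_smul, smul_smul,
            mul_inv_cancel₀ (ne_of_gt hc0), one_smul]
        have hcore := core_real hρ hσ hτD hc0 hc1' hle hsb
        have h1 : relEntEnt ρ ≤ qRelEnt ρ τ' := by
          unfold relEntEnt
          exact iInf₂_le τ' hsep
        have hqρ : qRelEnt ρ τ' = ENNReal.ofReal ((ρ * (matLog ρ - matLog τ')).trace.re) := by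
          simp only [qRelEnt]
          rw [if_pos hsubρ]
        have hqσ : qRelEnt σ τ' = ENNReal.ofReal ((σ * (matLog σ - matLog τ')).trace.re) := by
          simp only [qRelEnt]
          rw [if_pos hsb]
        calc ENNReal.ofReal c * relEntEnt ρ ≤ ENNReal.ofReal c * qRelEnt ρ τ' :=
              mul_le_mul_right h1 _
          _ = ENNReal.ofReal (c * ((ρ * (matLog ρ - matLog τ')).trace.re)) := by
              rw [hqρ, ← ENNReal.ofReal_mul hc0.le]
          _ ≤ ENNReal.ofReal ((σ * (matLog σ - matLog τ')).trace.re
                + (-(c * Real.log c) - (1 - c) * Real.log (1 - c))) :=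
              ENNReal.ofReal_le_ofReal hcore
          _ ≤ ENNReal.ofReal ((σ * (matLog σ - matLog τ')).trace.re) + K := by
              rw [hKdef]
              exact ENNReal.ofReal_add_le
          _ = qRelEnt σ τ' + K := by rw [hqσ]
      · simp only [qRelEnt]
        rw [if_neg hsb, top_add]
        exact le_top
    have hrw : relEntEnt σ + K = ⨅ (τ' : Matrix (∀ s, Fin (d s)) (∀ s, Fin (d s)) ℂ),
        ⨅ (_ : IsSepState τ'), (qRelEnt σ τ' + K) := by
      unfold relEntEnt
      rw [ENNReal.iInf_add]
      exact iInf_congr fun τ' => ENNReal.iInf_add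
    rw [hrw]
    exact le_iInf₂ key
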